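/- Let M be a von Neumann algebra and P, Q ∈ M projections with P + Q = I and both having central carrier equal to I (and the carriers are nonzero). If T ∈ M commutes with PXQ and with QXP for every X ∈ M, then T ∈ Z(M). -/

import Mathlib

variable {H : Type*} [NormedAddCommGroup H] [InnerProductSpace ℂ H] [CompleteSpace H]

/-- `Z` lies in the center of the von Neumann algebra `M`. -/
def VonNeumannAlgebra.IsCentral (M : VonNeumannAlgebra H) (Z : H →L[ℂ] H) : Prop :=
  Z ∈ M ∧ ∀ A ∈ M, Z * A = A * Z

/-- `P` is a projection (self-adjoint idempotent) in `M`. -/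
def VonNeumannAlgebra.IsProjection (M : VonNeumannAlgebra H) (P : H →L[ℂ] H) : Prop :=
  P ∈ M ∧ P * P = P ∧ star P = P

/-- `Q` is a central projection of `M`. -/
def VonNeumannAlgebra.IsCentralProjection (M : VonNeumannAlgebra H) (Q : H →L[ℂ] H) : Prop :=
  M.IsCentral Q ∧ Q * Q = Q ∧ star Q = Q

/-- The core of the projection `P` (the largest central projection below `P`) is zero,
i.e. the only central projection `Q` with `Q ≤ P` (equivalently `Q * P = Q`) is `0`. -/
def VonNeumannAlgebra.CoreZero (M : VonNeumannAlgebra H) (P : H →L[ℂ] H) : Prop :=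
  ∀ Q : H →L[ℂ] H, M.IsCentralProjection Q → Q * P = Q → Q = 0

/-- The central carrier of the projection `P` (the smallest central projection above `P`)
is `1`, i.e. the only central projection `Q` with `Q * P = P` is `1`. -/
def VonNeumannAlgebra.CarrierOne (M : VonNeumannAlgebra H) (P : H →L[ℂ] H) : Prop :=
  ∀ Q : H →L[ℂ] H, M.IsCentralProjection Q → Q * P = P → Q = 1

/-- `M` has no central summand of type I₁: equivalently, `M` contains a projection
with core `0` and central carrier `1`. -/
def VonNeumannAlgebra.NoTypeI1 (M : VonNeumannAlgebra H) : Prop :=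
  ∃ P : H →L[ℂ] H, M.IsProjection P ∧ M.CoreZero P ∧ M.CarrierOne P

/-- If `Q ∈ M` has central carrier `1`, then any operator `S` with `S (B Q) = 0` for all
`B ∈ M` is zero. -/
lemma kill_of_carrierOne (M : VonNeumannAlgebra H) (Q : H →L[ℂ] H)
    (hQM : Q ∈ M) (hcQ : M.CarrierOne Q)
    (S : H →L[ℂ] H) (hS : ∀ B ∈ M, S * (B * Q) = 0) : S = 0 := by
  classical
  set s : Set H := {y | ∃ B ∈ M, ∃ x : H, (B * Q) x = y} with hs
  set K : Submodule ℂ H := (Submodule.span ℂ s).topologicalClosure with hK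
  have hKc : IsClosed (K : Set H) := Submodule.isClosed_topologicalClosure _
  haveI : CompleteSpace K := hKc.completeSpace_coe
  set E : H →L[ℂ] H := K.subtypeL.comp (K.orthogonalProjectionOnto) with hE
  have hEmem : ∀ x : H, E x ∈ K := fun x => (K.orthogonalProjectionOnto x).2
  have hEfix : ∀ x ∈ K, E x = x := fun x hx => Submodule.starProjection_eq_self_iff.mpr hx
  have hEsa : IsSelfAdjoint E := isSelfAdjoint_starProjection K
  have hsK : s ⊆ (K : Set H) := fun y hy =>
    Submodule.le_topologicalClosure _ (Submodule.subset_span hy)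
  -- invariance transfer: if `C` maps `s` into `K`, then `C` maps `K` into `K`
  have inv_of_s : ∀ C : H →L[ℂ] H, (∀ y ∈ s, C y ∈ K) → ∀ y ∈ K, C y ∈ K := by
    intro C hC y hy
    have h1 : Submodule.span ℂ s ≤ K.comap (C : H →ₗ[ℂ] H) := by
      rw [Submodule.span_le]
      intro z hz; exact hC z hz
    have h2 : IsClosed ((K.comap (C : H →ₗ[ℂ] H) : Submodule ℂ H) : Set H) := by
      have h3 : ((K.comap (C : H →ₗ[ℂ] H) : Submodule ℂ H) : Set H) = C ⁻¹' (K : Set H) := rfl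
      rw [h3]; exact hKc.preimage C.continuous
    exact ((Submodule.span ℂ s).topologicalClosure_minimal h1 h2) hy
  -- `E` commutes with operators which, together with their adjoints, leave `K` invariant
  have comm_of_inv : ∀ B : H →L[ℂ] H, (∀ y ∈ K, B y ∈ K) → (∀ y ∈ K, (star B) y ∈ K) →
      E * B = B * E := by
    intro B hB hBs
    have h1 : E * (B * E) = B * E := by
      ext x
      exact hEfix _ (hB _ (hEmem x))
    have h2 : E * (star B * E) = star B * E := by
      ext x
      exact hEfix _ (hBs _ (hEmem x))
    have h3 := congrArg star h2
    simp only [star_mul, star_star, hEsa.star_eq] at h3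
    calc E * B = E * B * E := h3.symm
    _ = E * (B * E) := by rw [mul_assoc]
    _ = B * E := h1
  -- `K` is invariant under `M`
  have invM : ∀ A ∈ M, ∀ y ∈ K, A y ∈ K := by
    intro A hA
    refine inv_of_s A ?_
    rintro y ⟨B, hB, x, rfl⟩
    refine hsK ⟨A * B, mul_mem hA hB, x, ?_⟩
    simp [mul_assoc]
  -- `K` is invariant under the commutant of `M`
  have invM' : ∀ C ∈ Set.centralizer (M : Set (H →L[ℂ] H)), ∀ y ∈ K, C y ∈ K := by
    intro C hC
    refine inv_of_s C ?_
    rintro y ⟨B, hB, x, rfl⟩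
    refine hsK ⟨B, hB, C x, ?_⟩
    have h := hC (B * Q) (mul_mem hB hQM)
    have := DFunLike.congr_fun h x
    simpa using this
  -- the commutant of `M` is star-closed
  have star_comm : ∀ C ∈ Set.centralizer (M : Set (H →L[ℂ] H)),
      star C ∈ Set.centralizer (M : Set (H →L[ℂ] H)) := by
    intro C hC A hA
    have h := hC (star A) (star_mem hA)
    calc A * star C = star (C * star A) := by simp [star_mul]
    _ = star (star A * C) := by rw [h]
    _ = star C * A := by simp [star_mul]
  -- `E` belongs to `M` by the double-commutant property
  have hEM : E ∈ M := by
    have h : E ∈ Set.centralizer (Set.centralizer (M : Set (H →L[ℂ] H))) := by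
      intro C hC
      exact (comm_of_inv C (invM' C hC) (invM' (star C) (star_comm C hC))).symm
    rwa [M.centralizer_centralizer] at h
  -- `E` commutes with `M`
  have hEcomm : ∀ A ∈ M, E * A = A * E := fun A hA =>
    comm_of_inv A (invM A hA) (invM (star A) (star_mem hA))
  -- `E` is idempotent
  have hEE : E * E = E := by
    ext x
    exact hEfix _ (hEmem x)
  -- `E * Q = Q`
  have hEQ : E * Q = Q := by
    ext x
    have hx : Q x ∈ K := hsK ⟨1, one_mem M, x, by simp⟩
    exact hEfix _ hx
  have hE1 : E = 1 := hcQ E ⟨⟨hEM, hEcomm⟩, hEE, hEsa.star_eq⟩ hEQ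
  -- `S` vanishes on `K`, which is everything
  have hker : K ≤ LinearMap.ker (S : H →ₗ[ℂ] H) := by
    refine (Submodule.span ℂ s).topologicalClosure_minimal ?_ ?_
    · rw [Submodule.span_le]
      rintro y ⟨B, hB, x, rfl⟩
      have h := hS B hB
      have := DFunLike.congr_fun h x
      simpa using this
    · exact isClosed_eq S.continuous continuous_zero
  ext x
  have hx : x ∈ K := by
    have h := hEmem x
    rwa [hE1] at h
  simpa using hker hx

/-- Half of the diagonal argument: `T` commutes with the `P`-corner `P A P`. -/
lemma half_diag (M : VonNeumannAlgebra H) (P Q T : H →L[ℂ] H)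
    (hPP : P * P = P) (hQQ : Q * Q = Q) (hPQ : P + Q = 1)
    (hPM : P ∈ M)
    (killQ : ∀ S : H →L[ℂ] H, (∀ B ∈ M, S * (B * Q) = 0) → S = 0)
    (killP : ∀ S : H →L[ℂ] H, (∀ B ∈ M, S * (B * P) = 0) → S = 0)
    (hc1 : ∀ X ∈ M, T * (P * X * Q) = (P * X * Q) * T)
    (hc2 : ∀ X ∈ M, T * (Q * X * P) = (Q * X * P) * T) :
    ∀ A ∈ M, T * (P * A * P) = (P * A * P) * T := by
  have hPQ0 : P * Q = 0 := by
    have h : P * (P + Q) = P * 1 := by rw [hPQ]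
    rw [mul_add, hPP, mul_one] at h
    exact add_eq_left.mp h
  have hQP0 : Q * P = 0 := by
    have h : Q * (P + Q) = Q * 1 := by rw [hPQ]
    rw [mul_add, hQQ, mul_one] at h
    exact add_eq_right.mp h
  have hQTP : Q * T * P = 0 := by
    apply killQ
    intro B hB
    have h2 : Q * (T * (P * B * Q)) = Q * ((P * B * Q) * T) := by rw [hc1 B hB]
    calc Q * T * P * (B * Q) = Q * (T * (P * B * Q)) := by noncomm_ring
    _ = Q * ((P * B * Q) * T) := h2
    _ = (Q * P) * (B * (Q * T)) := by noncomm_ring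
    _ = 0 := by rw [hQP0, zero_mul]
  have hPTQ : P * T * Q = 0 := by
    apply killP
    intro B hB
    have h2 : P * (T * (Q * B * P)) = P * ((Q * B * P) * T) := by rw [hc2 B hB]
    calc P * T * Q * (B * P) = P * (T * (Q * B * P)) := by noncomm_ring
    _ = P * ((Q * B * P) * T) := h2
    _ = (P * Q) * (B * (P * T)) := by noncomm_ring
    _ = 0 := by rw [hPQ0, zero_mul]
  have hTQ : T * Q = Q * T := by
    have l : T * Q = Q * T * Q := by
      calc T * Q = (P + Q) * T * Q := by rw [hPQ, one_mul]
      _ = P * T * Q + Q * T * Q := by noncomm_ring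
      _ = Q * T * Q := by rw [hPTQ, zero_add]
    have r : Q * T = Q * T * Q := by
      calc Q * T = Q * T * (P + Q) := by rw [hPQ, mul_one]
      _ = Q * T * P + Q * T * Q := by noncomm_ring
      _ = Q * T * Q := by rw [hQTP, zero_add]
    exact l.trans r.symm
  intro A hA
  have key : ∀ B ∈ M, (T * (P * A * P) - (P * A * P) * T) * (B * Q) = 0 := by
    intro B hB
    have e1 : T * (P * A * P) * (B * Q) = (P * (A * P * B) * Q) * T := by
      have h := hc1 (A * P * B) (mul_mem (mul_mem hA hPM) hB)
      calc T * (P * A * P) * (B * Q) = T * (P * (A * P * B) * Q) := by noncomm_ring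
      _ = (P * (A * P * B) * Q) * T := h
    have hx : T * (B * Q) = T * (P * B * Q) + (T * Q) * (B * Q) := by
      have hsp : B * Q = P * (B * Q) + Q * (B * Q) := by
        rw [← add_mul, hPQ, one_mul]
      calc T * (B * Q) = T * (P * (B * Q) + Q * (B * Q)) := by rw [← hsp]
      _ = T * (P * B * Q) + (T * Q) * (B * Q) := by noncomm_ring
    have e2 : (P * A * P) * (T * (B * Q)) = (P * (A * P * B) * Q) * T := by
      calc (P * A * P) * (T * (B * Q))
          = (P * A * P) * (T * (P * B * Q)) + (P * A * P) * ((T * Q) * (B * Q)) := by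
            rw [hx, mul_add]
      _ = (P * A * P) * ((P * B * Q) * T) + (P * A * P) * ((Q * T) * (B * Q)) := by
            rw [hc1 B hB, hTQ]
      _ = (P * A * (P * P) * B * Q) * T + ((P * A) * (P * Q)) * (T * (B * Q)) := by
            noncomm_ring
      _ = (P * (A * P * B) * Q) * T := by
            rw [hPP, hPQ0, mul_zero, zero_mul, add_zero]; noncomm_ring
    calc (T * (P * A * P) - (P * A * P) * T) * (B * Q)
        = T * (P * A * P) * (B * Q) - (P * A * P) * (T * (B * Q)) := by noncomm_ring
    _ = (P * (A * P * B) * Q) * T - (P * (A * P * B) * Q) * T := by rw [e1, e2]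
    _ = 0 := sub_self _
  have h0 := killQ _ key
  exact sub_eq_zero.mp h0

theorem comm_with_corners_mem_center (M : VonNeumannAlgebra H) (P Q T : H →L[ℂ] H)
    (hP : M.IsProjection P) (hQ : M.IsProjection Q) (hPQ : P + Q = 1)
    (hcP : M.CarrierOne P) (hcQ : M.CarrierOne Q) (hone : (1 : H →L[ℂ] H) ≠ 0)
    (hT : T ∈ M)
    (hcomm : ∀ X ∈ M, T * (P * X * Q) = (P * X * Q) * T ∧ T * (Q * X * P) = (Q * X * P) * T) :
    M.IsCentral T := by
  refine ⟨hT, ?_⟩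
  intro A hA
  have killQ := kill_of_carrierOne M Q hQ.1 hcQ
  have killP := kill_of_carrierOne M P hP.1 hcP
  have hc1 : ∀ X ∈ M, T * (P * X * Q) = (P * X * Q) * T := fun X hX => (hcomm X hX).1
  have hc2 : ∀ X ∈ M, T * (Q * X * P) = (Q * X * P) * T := fun X hX => (hcomm X hX).2
  have hQP : Q + P = 1 := by rw [add_comm]; exact hPQ
  have hdP := half_diag M P Q T hP.2.1 hQ.2.1 hPQ hP.1 killQ killP hc1 hc2 A hA
  have hdQ := half_diag M Q P T hQ.2.1 hP.2.1 hQP hQ.1 killP killQ hc2 hc1 A hA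
  have o1 := hc1 A hA
  have o2 := hc2 A hA
  have expand : (P + Q) * A * (P + Q) = P * A * P + P * A * Q + Q * A * P + Q * A * Q := by
    noncomm_ring
  have hA' : A = P * A * P + P * A * Q + Q * A * P + Q * A * Q := by
    rw [← expand, hPQ, one_mul, mul_one]
  calc T * A = T * (P * A * P + P * A * Q + Q * A * P + Q * A * Q) := by rw [← hA']
  _ = T * (P * A * P) + T * (P * A * Q) + T * (Q * A * P) + T * (Q * A * Q) := by
        rw [mul_add, mul_add, mul_add]
  _ = (P * A * P) * T + (P * A * Q) * T + (Q * A * P) * T + (Q * A * Q) * T := by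
        rw [hdP, o1, o2, hdQ]
  _ = (P * A * P + P * A * Q + Q * A * P + Q * A * Q) * T := by
        rw [add_mul, add_mul, add_mul]
  _ = A * T := by rw [← hA']
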